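/- For every m-stable affine permutation ω, the function PS_ω(α) := #{β : β > α, 0 < ω^{-1}(α) - ω^{-1}(β) < m} restricted to α ∈ {1,...,n} is an m/n-parking function. -/

import Mathlib

open Finset

/-- number of `z ∈ (t, t+m]` with `ω z > ω x`. -/
private noncomputable def cnt (ω : ℤ ≃ ℤ) (m : ℕ) (t x : ℤ) : ℕ :=
  ((Finset.Ioc t (t + m)).filter (fun z => ω x < ω z)).card

/-- `PS` in `x`-coordinates: number of `z ∈ (x-m, x]` with `ω z > ω x`. -/
private noncomputable def psx (ω : ℤ ≃ ℤ) (m : ℕ) (x : ℤ) : ℕ := cnt ω m (x - m) x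

private lemma cnt_step (ω : ℤ ≃ ℤ) (m : ℕ) (hm : 0 < m)
    (hst : ∀ x : ℤ, ω x < ω (x + m)) (t x : ℤ) :
    cnt ω m t x ≤ cnt ω m (t + 1) x := by
  have h1 : Finset.Ioc t (t + m) = insert (t + 1) (Finset.Ioc (t + 1) (t + m)) := by
    ext z; simp only [mem_Ioc, mem_insert]; omega
  have h2 : Finset.Ioc (t + 1) (t + 1 + m) = insert (t + 1 + m) (Finset.Ioc (t + 1) (t + m)) := by
    ext z; simp only [mem_Ioc, mem_insert]; omega
  have hnm1 : (t + 1) ∉ Finset.Ioc (t + 1) (t + m) := by simp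
  have hnm2 : (t + 1 + m) ∉ Finset.Ioc (t + 1) (t + m) := by
    simp only [mem_Ioc]; omega
  have himp : ω x < ω (t + 1) → ω x < ω (t + 1 + m) := fun h => h.trans (hst (t + 1))
  unfold cnt
  rw [h1, h2, Finset.filter_insert, Finset.filter_insert]
  split_ifs with h3 h4 h4
  · rw [Finset.card_insert_of_notMem (fun h => hnm1 (Finset.mem_of_mem_filter _ h)),
      Finset.card_insert_of_notMem (fun h => hnm2 (Finset.mem_of_mem_filter _ h))]
  · exact absurd (himp h3) h4
  · exact Finset.card_le_card (Finset.subset_insert _ _)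
  · exact le_refl _

private lemma cnt_mono (ω : ℤ ≃ ℤ) (m : ℕ) (hm : 0 < m)
    (hst : ∀ x : ℤ, ω x < ω (x + m)) (x : ℤ) {t t' : ℤ} (h : t ≤ t') :
    cnt ω m t x ≤ cnt ω m t' x := by
  exact Int.le_induction (motive := fun s _ => cnt ω m t x ≤ cnt ω m s x) (le_refl _)
    (fun t'' _ ih => ih.trans (cnt_step ω m hm hst t'' x)) t' h

/-- each window of length `m` contains exactly `ℓ` elements whose in-window
count of larger values is `< ℓ`, provided `ℓ ≤ m`. -/
private lemma window_count (ω : ℤ ≃ ℤ) (m : ℕ) (hm : 0 < m) {ℓ : ℕ} (hl : ℓ ≤ m) (t : ℤ) :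
    ((Finset.Ioc t (t + m)).filter (fun x => cnt ω m t x < ℓ)).card = ℓ := by
  set W := Finset.Ioc t (t + m) with hW
  have hWcard : W.card = m := by rw [hW, Int.card_Ioc]; omega
  have key : ∀ x y : ℤ, y ∈ W → ω x < ω y → cnt ω m t y < cnt ω m t x := by
    intro x y hy hxy
    apply Finset.card_lt_card
    rw [Finset.ssubset_iff_of_subset]
    · exact ⟨y, by simp [mem_filter, hy, hxy, hW]; exact Finset.mem_Ioc.mp hy⟩
    · exact Finset.monotone_filter_right _ (fun z _ hz => hxy.trans hz)
  have hinj : Set.InjOn (cnt ω m t) W := by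
    intro x hx y hy hxy
    rcases lt_trichotomy (ω x) (ω y) with h | h | h
    · exact absurd hxy (by have := key x y hy h; omega)
    · exact ω.injective h
    · exact absurd hxy (by have := key y x hx h; omega)
  have hlt : ∀ x ∈ W, cnt ω m t x < m := by
    intro x hx
    have hsub : (W.filter (fun z => ω x < ω z)) ⊆ W.erase x := by
      intro z hz
      rw [Finset.mem_filter] at hz
      exact Finset.mem_erase.mpr ⟨fun h => absurd hz.2 (by rw [h]; exact lt_irrefl _), hz.1⟩
    calc cnt ω m t x ≤ (W.erase x).card := Finset.card_le_card hsub
      _ < m := by rw [Finset.card_erase_of_mem hx, hWcard]; omega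
  have himg : W.image (cnt ω m t) = Finset.range m := by
    apply Finset.eq_of_subset_of_card_le
    · intro v hv
      obtain ⟨x, hx, rfl⟩ := Finset.mem_image.mp hv
      exact Finset.mem_range.mpr (hlt x hx)
    · rw [Finset.card_range, Finset.card_image_of_injOn hinj, hWcard]
  have h1 : (W.filter (fun x => cnt ω m t x < ℓ)).card
      = ((W.image (cnt ω m t)).filter (fun v => v < ℓ)).card := by
    rw [Finset.filter_image, Finset.card_image_of_injOn (hinj.mono (Finset.filter_subset _ _))]
  rw [h1, himg]
  have : (Finset.range m).filter (fun v => v < ℓ) = Finset.range ℓ := by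
    ext v; simp only [mem_filter, mem_range]; omega
  rw [this, Finset.card_range]

/-- an `n`-periodic function is constant on residue classes mod `n`. -/
private lemma periodic_cong {n : ℕ} {f : ℤ → ℕ} (hf : ∀ x, f (x + n) = f x)
    {x y : ℤ} (h : (x : ZMod n) = (y : ZMod n)) : f x = f y := by
  have hstep : ∀ k : ℤ, ∀ x : ℤ, f (x + k * n) = f x := by
    intro k
    induction k using Int.induction_on with
    | zero => simp
    | succ k ih =>
        intro x
        have : x + (k + 1 : ℤ) * n = (x + k * n) + n := by ring
        rw [this, hf, ih]
    | pred k ih =>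
        intro x
        have h2 : x + (-k - 1 : ℤ) * n = (x - n) + (-k : ℤ) * n := by ring
        have h3 : f (x - n) = f x := by rw [← hf (x - n)]; ring_nf
        rw [h2, ih, h3]
  obtain ⟨k, hk⟩ := (ZMod.intCast_eq_intCast_iff _ _ _).mp h |>.dvd
  have hy : y = x + k * n := by linear_combination hk
  rw [hy, hstep]

private lemma sum_period {n : ℕ} [NeZero n] {f : ℤ → ℕ} (hf : ∀ x, f (x + n) = f x)
    (c : ℤ) :
    ∑ i ∈ Finset.range n, f (c + i) = ∑ a : ZMod n, f ((a.val : ℤ)) := by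
  apply Finset.sum_nbij' (i := fun i : ℕ => ((c + i : ℤ) : ZMod n))
    (j := fun a : ZMod n => (a - (c : ZMod n)).val)
  · intro a _; exact Finset.mem_univ _
  · intro a _; exact Finset.mem_range.mpr (ZMod.val_lt _)
  · intro i hi
    have : ((c + i : ℤ) : ZMod n) = (c : ZMod n) + (i : ZMod n) := by push_cast; ring
    rw [this, add_sub_cancel_left, ZMod.val_cast_of_lt (Finset.mem_range.mp hi)]
  · intro a _
    push_cast
    rw [ZMod.natCast_rightInverse _]
    ring
  · intro i _
    apply periodic_cong hf
    push_cast
    rw [ZMod.natCast_rightInverse _]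

/-- periodicity of an affine bijection at all multiples. -/
private lemma equiv_periodic_mul {n : ℕ} (e : ℤ ≃ ℤ) (he : ∀ x : ℤ, e (x + n) = e x + n)
    (k : ℤ) : ∀ x : ℤ, e (x + k * n) = e x + k * n := by
  induction k using Int.induction_on with
  | zero => simp
  | succ k ih =>
      intro x
      have h1 : x + (k + 1 : ℤ) * n = (x + k * n) + n := by ring
      rw [h1, he, ih]; ring
  | pred k ih =>
      intro x
      have h2 : e (x - n) = e x - n := by
        have := he (x - n); rw [sub_add_cancel] at this; omega
      have h1 : x + (-k - 1 : ℤ) * n = (x - n) + (-k : ℤ) * n := by ring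
      rw [h1, ih, h2]; ring

/-- summing an `n`-periodic function over the image of a period by a
periodic bijection gives the same as over a period. -/
private lemma sum_comp_equiv {n : ℕ} [NeZero n] {f : ℤ → ℕ} (hf : ∀ x, f (x + n) = f x)
    (e : ℤ ≃ ℤ) (he : ∀ x : ℤ, e (x + n) = e x + n) (c : ℤ) :
    ∑ i ∈ Finset.range n, f (e (c + i)) = ∑ a : ZMod n, f ((a.val : ℤ)) := by
  have hg : ∀ x : ℤ, f (e (x + n)) = f (e x) := by intro x; rw [he, hf]
  have h0 := sum_period (n := n) (f := fun x => f (e x)) hg c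
  refine h0.trans ?_
  set E : ZMod n → ZMod n := fun a => ((e ((a.val : ℤ)) : ℤ) : ZMod n) with hE
  have hEinj : Function.Injective E := by
    intro a b hab
    simp only [hE] at hab
    obtain ⟨k, hk⟩ := (ZMod.intCast_eq_intCast_iff _ _ _).mp hab |>.dvd
    have h1 : e ((b.val : ℤ)) = e ((a.val : ℤ)) + k * n := by linarith [hk]
    have h2 : e ((a.val : ℤ) + k * n) = e ((a.val : ℤ)) + k * n :=
      equiv_periodic_mul e he k _
    have h3 : ((b.val : ℤ)) = (a.val : ℤ) + k * n := e.injective (by rw [h2, h1])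
    have h4 : ((b.val : ℤ) : ZMod n) = (((a.val : ℤ) + k * n : ℤ) : ZMod n) := by rw [h3]
    push_cast at h4
    rw [ZMod.natCast_rightInverse _, ZMod.natCast_rightInverse _] at h4
    simpa using h4.symm
  have hEbij : Function.Bijective E := Finite.injective_iff_bijective.mp hEinj
  apply Fintype.sum_bijective E hEbij
  intro a
  apply periodic_cong hf
  simp only [hE]
  push_cast
  rw [ZMod.natCast_rightInverse _]

/-- reindex a sum over an integer interval. -/
private lemma sum_Ioc_eq (g : ℤ → ℕ) (T : ℤ) (m : ℕ) :
    ∑ x ∈ Finset.Ioc T (T + m), g x = ∑ j ∈ Finset.range m, g (T + 1 + j) := by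
  have himg : (Finset.range m).image (fun j : ℕ => T + 1 + (j : ℤ)) = Finset.Ioc T (T + m) := by
    ext z
    simp only [mem_image, mem_Ioc, mem_range]
    constructor
    · rintro ⟨j, hj, rfl⟩; omega
    · intro ⟨h1, h2⟩; exact ⟨(z - T - 1).toNat, by omega, by omega⟩
  rw [← himg, Finset.sum_image (by intro a _ b _ h; have h' : T + 1 + (a : ℤ) = T + 1 + (b : ℤ) := h; omega)]

/-- For every `m`-stable affine permutation `ω`, the function
`PS_ω(α) = #{β > α : 0 < ω⁻¹(α) - ω⁻¹(β) < m}` on `{1,…,n}` is an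
`m/n`-parking function. -/
theorem stmt_10 (m n : ℕ) (hm : 0 < m) (hn : 0 < n) (hcop : Nat.Coprime m n)
    (ω : ℤ ≃ ℤ)
    (hper : ∀ x : ℤ, ω (x + n) = ω x + n)
    (hsum : 2 * ∑ i ∈ Finset.Icc (1 : ℤ) (n : ℤ), ω i = n * (n + 1))
    (hst : ∀ x : ℤ, ω x < ω (x + m)) :
    ∀ ℓ : ℕ, 0 < ℓ → ℓ ≤ m →
      ℓ * n ≤ m * {α : Fin n |
        {β : ℤ | (α : ℤ) + 1 < β ∧
          0 < ω.symm ((α : ℤ) + 1) - ω.symm β ∧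
          ω.symm ((α : ℤ) + 1) - ω.symm β < m}.ncard < ℓ}.ncard := by
  classical
  intro ℓ hl0 hlm
  set σ := ω.symm with hσdef
  have hσper : ∀ y : ℤ, σ (y + n) = σ y + n := by
    intro y
    apply ω.injective
    rw [hσdef]
    rw [Equiv.apply_symm_apply, hper, Equiv.apply_symm_apply]
  -- periodicity of psx
  have hpsxper : ∀ x : ℤ, psx ω m (x + n) = psx ω m x := by
    intro x
    unfold psx cnt
    have himg : ((Finset.Ioc (x - m) (x - m + m)).filter (fun z => ω x < ω z)).image
        (fun z => z + (n : ℤ))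
        = (Finset.Ioc (x + n - m) (x + n - m + m)).filter (fun z => ω (x + n) < ω z) := by
      ext b
      simp only [mem_image, mem_filter, mem_Ioc]
      constructor
      · rintro ⟨z, ⟨⟨h1, h2⟩, h3⟩, rfl⟩
        refine ⟨⟨by omega, by omega⟩, ?_⟩
        rw [hper, hper]; omega
      · rintro ⟨⟨h1, h2⟩, h3⟩
        refine ⟨b - n, ⟨⟨by omega, by omega⟩, ?_⟩, by omega⟩
        have hb : ω (b - n + n) = ω (b - n) + n := hper (b - n)
        rw [hper] at h3
        rw [sub_add_cancel] at hb
        omega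
    rw [← himg, Finset.card_image_of_injective _ (fun a b h => by omega)]
  -- the inner set's ncard equals psx
  have hinner : ∀ α : ℤ,
      {β : ℤ | α + 1 < β ∧ 0 < σ (α + 1) - σ β ∧ σ (α + 1) - σ β < m}.ncard
        = psx ω m (σ (α + 1)) := by
    intro α
    set x := σ (α + 1) with hx
    have hωx : ω x = α + 1 := by rw [hx, hσdef, Equiv.apply_symm_apply]
    have hset : {β : ℤ | α + 1 < β ∧ 0 < σ (α + 1) - σ β ∧ σ (α + 1) - σ β < m}
        = ↑(((Finset.Ioc (x - m) (x - m + m)).filter (fun z => ω x < ω z)).image ω) := by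
      ext β
      simp only [Set.mem_setOf_eq, coe_image, Set.mem_image, coe_filter, mem_Ioc,
        Set.mem_setOf_eq]
      constructor
      · rintro ⟨h1, h2, h3⟩
        refine ⟨σ β, ⟨⟨by omega, by omega⟩, ?_⟩, by rw [hσdef, Equiv.apply_symm_apply]⟩
        rw [hωx]
        calc α + 1 < β := h1
          _ = ω (σ β) := by rw [hσdef, Equiv.apply_symm_apply]
      · rintro ⟨z, ⟨⟨h1, h2⟩, h3⟩, rfl⟩
        have hz : σ (ω z) = z := by rw [hσdef, Equiv.symm_apply_apply]
        rw [hωx] at h3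
        have hzx : z ≠ x := by
          rintro rfl
          rw [hωx] at h3
          omega
        exact ⟨h3, by rw [hz]; omega, by rw [hz]; omega⟩
    rw [hset, Set.ncard_coe_finset,
      Finset.card_image_of_injective _ ω.injective]
    rfl
  -- define the indicator
  set f : ℤ → ℕ := fun x => if psx ω m x < ℓ then 1 else 0 with hf
  have hfper : ∀ x : ℤ, f (x + n) = f x := by
    intro x; simp only [hf, hpsxper]
  haveI : NeZero n := ⟨hn.ne'⟩
  set ZA : ℕ := ∑ a : ZMod n, f ((a.val : ℤ)) with hZA
  -- the outer ncard equals ZA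
  have houter : {α : Fin n |
      {β : ℤ | (α : ℤ) + 1 < β ∧ 0 < σ ((α : ℤ) + 1) - σ β ∧
        σ ((α : ℤ) + 1) - σ β < m}.ncard < ℓ}.ncard = ZA := by
    rw [Set.ncard_eq_toFinset_card', Set.toFinset_setOf, Finset.card_filter]
    have hsum1 : ∀ α : Fin n,
        (if {β : ℤ | (α : ℤ) + 1 < β ∧ 0 < σ ((α : ℤ) + 1) - σ β ∧
          σ ((α : ℤ) + 1) - σ β < m}.ncard < ℓ then 1 else 0) = f (σ (1 + (α : ℤ))) := by
      intro α
      rw [hinner ((α : ℤ))]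
      simp only [hf]
      rw [add_comm (1 : ℤ) ((α : ℤ))]
    calc (∑ α : Fin n, if {β : ℤ | (α : ℤ) + 1 < β ∧ 0 < σ ((α : ℤ) + 1) - σ β ∧
            σ ((α : ℤ) + 1) - σ β < m}.ncard < ℓ then 1 else 0)
        = ∑ α : Fin n, f (σ (1 + (α : ℤ))) := by
          exact Finset.sum_congr rfl (fun α _ => hsum1 α)
      _ = ∑ i ∈ Finset.range n, f (σ (1 + (i : ℤ))) := by
          exact Fin.sum_univ_eq_sum_range (fun i : ℕ => f (σ (1 + (i : ℤ)))) n
      _ = ZA := sum_comp_equiv hfper σ hσper 1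
  rw [houter]
  -- main counting inequality: ℓ * n ≤ m * ZA
  have hkey : ∀ t : ℤ, ℓ ≤ ∑ j ∈ Finset.range m, f (t + 1 + j) := by
    intro t
    have h1 : ((Finset.Ioc t (t + m)).filter (fun x => cnt ω m t x < ℓ)).card = ℓ :=
      window_count ω m hm hlm t
    have h2 : ((Finset.Ioc t (t + m)).filter (fun x => cnt ω m t x < ℓ))
        ⊆ ((Finset.Ioc t (t + m)).filter (fun x => psx ω m x < ℓ)) := by
      intro x hx
      rw [Finset.mem_filter] at hx ⊢
      refine ⟨hx.1, ?_⟩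
      have hxle : x - m ≤ t := by
        have := Finset.mem_Ioc.mp hx.1; omega
      have : psx ω m x ≤ cnt ω m t x := by
        unfold psx
        exact cnt_mono ω m hm hst x hxle
      omega
    have h3 : ℓ ≤ ((Finset.Ioc t (t + m)).filter (fun x => psx ω m x < ℓ)).card :=
      le_of_eq_of_le h1.symm (Finset.card_le_card h2)
    have h4 : ((Finset.Ioc t (t + m)).filter (fun x => psx ω m x < ℓ)).card
        = ∑ j ∈ Finset.range m, f (t + 1 + j) := by
      rw [Finset.card_filter, sum_Ioc_eq (fun x => if psx ω m x < ℓ then 1 else 0) t m]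
    omega
  have hchain : ℓ * n ≤ ∑ t ∈ Finset.range n, ∑ j ∈ Finset.range m, f ((t : ℤ) + 1 + j) := by
    calc ℓ * n = ∑ _t ∈ Finset.range n, ℓ := by rw [Finset.sum_const, Finset.card_range]; ring
      _ ≤ _ := Finset.sum_le_sum (fun t _ => hkey (t : ℤ))
  have hswap : ∑ t ∈ Finset.range n, ∑ j ∈ Finset.range m, f ((t : ℤ) + 1 + j)
      = m * ZA := by
    rw [Finset.sum_comm]
    have : ∀ j ∈ Finset.range m, ∑ t ∈ Finset.range n, f ((t : ℤ) + 1 + j) = ZA := by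
      intro j _
      have hre : ∀ t : ℕ, ((t : ℤ) + 1 + j) = ((1 + j : ℤ) + (t : ℤ)) := by intro t; ring
      calc ∑ t ∈ Finset.range n, f ((t : ℤ) + 1 + j)
          = ∑ t ∈ Finset.range n, f ((1 + j : ℤ) + (t : ℤ)) := by
            exact Finset.sum_congr rfl (fun t _ => by rw [hre t])
        _ = ZA := sum_period hfper (1 + j)
    rw [Finset.sum_congr rfl this, Finset.sum_const, Finset.card_range, smul_eq_mul]
  omega
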